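/- Let p and q be partitions of n with p ≥ q in the dominance order and suppose that for all t, the difference of partial sums (sum of first t parts of p) − (sum of first t parts of q) lies in {0, 1}. If moreover every part of p occurs with even multiplicity (i.e., p = p' ⊔ p' for some partition p' of n/2) and likewise q = q' ⊔ q' with p' ≥ q', then p = q. -/

import Mathlib

/-- Sum of the `t` largest elements of a multiset of naturals. -/
def sumLargest (M : Multiset ℕ) (t : ℕ) : ℕ := (((M.sort (· ≤ ·)).reverse).take t).sum

/-- Dominance order: for every `t`, the sum of the `t` largest parts of `M` is at least
that of `N`. -/
def Dom (M N : Multiset ℕ) : Prop := ∀ t, sumLargest N t ≤ sumLargest M t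

private def dbl (l : List ℕ) : List ℕ := l.flatMap (fun a => [a, a])

private lemma dbl_nil : dbl [] = [] := rfl
private lemma dbl_cons (a : ℕ) (l : List ℕ) : dbl (a :: l) = a :: a :: dbl l := rfl

private lemma mem_dbl {x : ℕ} {l : List ℕ} : x ∈ dbl l ↔ x ∈ l := by
  induction l with
  | nil => simp [dbl_nil]
  | cons a t ih => simp [dbl_cons, ih, or_self_left]

private lemma dbl_coe (l : List ℕ) : (↑(dbl l) : Multiset ℕ) = ↑l + ↑l := by
  induction l with
  | nil => simp [dbl_nil]
  | cons a t ih =>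
      simp only [dbl_cons, ← Multiset.cons_coe, ih]
      rw [Multiset.cons_add, Multiset.add_cons]

private lemma dbl_sorted {l : List ℕ} (h : l.Pairwise (· ≤ ·)) : (dbl l).Pairwise (· ≤ ·) := by
  induction l with
  | nil => simp [dbl_nil]
  | cons a t ih =>
      rw [List.pairwise_cons] at h
      rw [dbl_cons, List.pairwise_cons, List.pairwise_cons]
      refine ⟨?_, ?_, ih h.2⟩
      · intro b hb
        rcases List.mem_cons.mp hb with h' | hb
        · exact le_of_eq h'.symm
        · exact h.1 b (mem_dbl.mp hb)
      · intro b hb; exact h.1 b (mem_dbl.mp hb)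

private lemma dbl_reverse (l : List ℕ) : (dbl l).reverse = dbl l.reverse := by
  induction l with
  | nil => rfl
  | cons a t ih =>
      simp only [dbl_cons, List.reverse_cons]
      rw [ih]
      unfold dbl
      simp [List.flatMap_append]

private lemma sort_add_self (M : Multiset ℕ) :
    (M + M).sort (· ≤ ·) = dbl (M.sort (· ≤ ·)) := by
  refine (fun hp h1 h2 => List.Perm.eq_of_pairwise' (r := (· ≤ ·)) h1 h2 hp) ?_ ?_ ?_
  · rw [← Multiset.coe_eq_coe, Multiset.sort_eq, dbl_coe, Multiset.sort_eq]
  · exact Multiset.pairwise_sort _ _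
  · exact dbl_sorted (Multiset.pairwise_sort _ _)

private lemma dbl_take_sum (l : List ℕ) (t : ℕ) :
    ((dbl l).take (2 * t)).sum = 2 * (l.take t).sum := by
  induction l generalizing t with
  | nil => simp [dbl_nil]
  | cons a l ih =>
      cases t with
      | zero => simp
      | succ t =>
          rw [dbl_cons, show 2 * (t + 1) = (2 * t) + 1 + 1 by ring]
          simp only [List.take_succ_cons, List.sum_cons, ih]
          ring

private lemma sumLargest_double (M : Multiset ℕ) (t : ℕ) :
    sumLargest (M + M) (2 * t) = 2 * sumLargest M t := by
  unfold sumLargest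
  rw [sort_add_self, dbl_reverse, dbl_take_sum]

private lemma sort_sum (M : Multiset ℕ) : (M.sort (· ≤ ·)).sum = M.sum := by
  conv_rhs => rw [← Multiset.sort_eq M (· ≤ ·)]
  exact (Multiset.sum_coe _).symm

private lemma sumLargest_eq_sum (M : Multiset ℕ) {t : ℕ} (h : Multiset.card M ≤ t) :
    sumLargest M t = M.sum := by
  unfold sumLargest
  rw [List.take_of_length_le (by simpa using h)]
  rw [List.sum_reverse, sort_sum]

private lemma card_le_of_eq {A B : Multiset ℕ}
    (h : ∀ t, sumLargest A t = sumLargest B t) (hB : 0 ∉ B) :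
    Multiset.card B ≤ Multiset.card A := by
  by_contra hc
  push_neg at hc
  set lb := (B.sort (· ≤ ·)).reverse with hlb
  have hlen : lb.length = Multiset.card B := by simp [hlb]
  have hsumAB : A.sum = B.sum := by
    rw [← sumLargest_eq_sum A (le_max_left _ (Multiset.card B)),
      h, sumLargest_eq_sum B (le_max_right _ _)]
  have h1 : A.sum = sumLargest B (Multiset.card A) := by
    rw [← h, sumLargest_eq_sum A (le_refl _)]
  -- sumLargest B (card A) < B.sum
  have h2 : sumLargest B (Multiset.card A) < B.sum := by
    have hsplit : lb.sum = (lb.take (Multiset.card A)).sum + (lb.drop (Multiset.card A)).sum := by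
      rw [← List.sum_append, List.take_append_drop]
    have hlbsum : lb.sum = B.sum := by
      rw [hlb, List.sum_reverse, sort_sum]
    have hdrop : 0 < (lb.drop (Multiset.card A)).sum := by
      have hne : lb.drop (Multiset.card A) ≠ [] := by
        intro he
        have := List.drop_eq_nil_iff.mp he
        omega
      obtain ⟨x, hx⟩ := List.exists_mem_of_ne_nil _ hne
      have hxlb : x ∈ lb := List.mem_of_mem_drop hx
      have hxB : x ∈ B := by
        have : x ∈ (B.sort (· ≤ ·)) := by rw [hlb] at hxlb; exact List.mem_reverse.mp hxlb
        rw [← Multiset.mem_coe, Multiset.sort_eq] at this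
        exact this
      have hxpos : 0 < x := Nat.pos_of_ne_zero (fun h0 => hB (h0 ▸ hxB))
      calc 0 < x := hxpos
        _ ≤ (lb.drop (Multiset.card A)).sum := List.single_le_sum (fun _ _ => Nat.zero_le _) _ hx
    have : sumLargest B (Multiset.card A) = (lb.take (Multiset.card A)).sum := rfl
    omega
  omega

private lemma multiset_eq_of_sumLargest_eq {A B : Multiset ℕ}
    (h : ∀ t, sumLargest A t = sumLargest B t) (hA : 0 ∉ A) (hB : 0 ∉ B) : A = B := by
  have hcard : Multiset.card A = Multiset.card B :=
    le_antisymm (card_le_of_eq (fun t => (h t).symm) hA) (card_le_of_eq h hB)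
  set la := (A.sort (· ≤ ·)).reverse with hla
  set lb := (B.sort (· ≤ ·)).reverse with hlb
  have hlal : la.length = Multiset.card A := by simp [hla]
  have hlbl : lb.length = Multiset.card B := by simp [hlb]
  have hleq : la = lb := by
    apply List.ext_getElem (by omega)
    intro i hi hi'
    have h1 : (la.take (i+1)).sum = (la.take i).sum + la[i] := List.sum_take_succ _ _ hi
    have h2 : (lb.take (i+1)).sum = (lb.take i).sum + lb[i] := List.sum_take_succ _ _ hi'
    have e1 : (la.take (i+1)).sum = (lb.take (i+1)).sum := h (i+1)
    have e2 : (la.take i).sum = (lb.take i).sum := h i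
    omega
  have : (A.sort (· ≤ ·)) = (B.sort (· ≤ ·)) := by
    have := congrArg List.reverse hleq
    simpa [hla, hlb] using this
  rw [← Multiset.sort_eq A (· ≤ ·), ← Multiset.sort_eq B (· ≤ ·), this]

/-- if `p = p' ⊔ p'` and `q = q' ⊔ q'` are partitions of `n` (every part with
even multiplicity) with `p' ≥ q'`, `p ≥ q`, and every partial-sum difference of `p` over `q`
lies in `{0, 1}`, then `p = q`. -/
theorem stmt_16 (n : ℕ) (p q p' q' : Multiset ℕ)
    (hp : p.sum = n) (hq : q.sum = n) (hp0 : 0 ∉ p) (hq0 : 0 ∉ q)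
    (hpp : p = p' + p') (hqq : q = q' + q')
    (hdom' : Dom p' q')
    (hdom : Dom p q)
    (hdiff : ∀ t, sumLargest p t ≤ sumLargest q t + 1) :
    p = q := by
  have key : ∀ t, sumLargest p' t = sumLargest q' t := by
    intro t
    have h1 : sumLargest p (2 * t) = 2 * sumLargest p' t := by
      rw [hpp, sumLargest_double]
    have h2 : sumLargest q (2 * t) = 2 * sumLargest q' t := by
      rw [hqq, sumLargest_double]
    have h3 := hdiff (2 * t)
    have h4 := hdom' t
    omega
  have hp0' : (0 : ℕ) ∉ p' := fun h => hp0 (hpp ▸ Multiset.mem_add.mpr (Or.inl h))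
  have hq0' : (0 : ℕ) ∉ q' := fun h => hq0 (hqq ▸ Multiset.mem_add.mpr (Or.inl h))
  have : p' = q' := multiset_eq_of_sumLargest_eq key hp0' hq0'
  rw [hpp, hqq, this]
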